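/- arXiv:0708.3912 — 2 statements merged into one kernel-verified Lean document; each statement's English description precedes it below -/
import Mathlib

section
/- For each natural number t, let ψ_t(x) = q^{−t}x, ψ_t(y) = q^t y, and let dₙ^{(t)} be the corresponding cohomology-complex differential. Then, with Dₙ := dim Ker d_{n+1}^{(t)} − dim Im dₙ^{(t)} (= dim HHⁿ(Λ, M_t)), one has D_{2t+2} ≠ 0 but Dₙ = 0 for all n > 2t+2. Hence for every N there exists a bimodule M with Ext_{Λᵉ}ⁿ(Λ, M) = 0 for n ≫ 0 but Ext_{Λᵉ}^N-vanishing failing below degree 2t+2, contradicting Auslander's conjecture for Λᵉ. -/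
/-- The matrix of the differential `dₙ : Λⁿ → Λ^{n+1}` of the complex computing
`HH^*(Λ, ₁Λ_ψ)` for `ψ(x) = αx`, `ψ(y) = βy`, in the standard basis
`{eᵢ, xeᵢ, yeᵢ, yxeᵢ}` (encoded by `Fin 4` as `0 ↦ eᵢ, 1 ↦ xeᵢ, 2 ↦ yeᵢ, 3 ↦ yxeᵢ`):
`eᵢ^{n−1} ↦ [1+(−1)ⁿqⁱα]xeᵢⁿ + [q^{n−i−1}+(−1)ⁿβ]ye^n_{i+1}`,
`xeᵢ^{n−1} ↦ [q^{n−i−1}+(−1)^{n+1}qβ]yxe^n_{i+1}`,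
`yeᵢ^{n−1} ↦ [−q+(−1)ⁿqⁱα]yxeᵢⁿ`, `yxeᵢ^{n−1} ↦ 0`. -/
def Dmat (k : Type) [Field k] (q α β : k) (n : ℕ) :
    Matrix (Fin (n + 1) × Fin 4) (Fin n × Fin 4) k := fun jb ia =>
  if jb.2 = 1 ∧ ia.2 = 0 ∧ (jb.1 : ℕ) = (ia.1 : ℕ) then
    1 + (-1 : k) ^ n * q ^ (ia.1 : ℕ) * α
  else if jb.2 = 2 ∧ ia.2 = 0 ∧ (jb.1 : ℕ) = (ia.1 : ℕ) + 1 then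
    q ^ (n - (ia.1 : ℕ) - 1) + (-1 : k) ^ n * β
  else if jb.2 = 3 ∧ ia.2 = 1 ∧ (jb.1 : ℕ) = (ia.1 : ℕ) + 1 then
    q ^ (n - (ia.1 : ℕ) - 1) + (-1 : k) ^ (n + 1) * q * β
  else if jb.2 = 3 ∧ ia.2 = 2 ∧ (jb.1 : ℕ) = (ia.1 : ℕ) then
    -q + (-1 : k) ^ n * q ^ (ia.1 : ℕ) * α
  else 0

/-- The differential `dₙ : Λⁿ → Λ^{n+1}` as a `k`-linear map. -/
noncomputable def dMap (k : Type) [Field k] (q α β : k) (n : ℕ) :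
    (Fin n × Fin 4 → k) →ₗ[k] (Fin (n + 1) × Fin 4 → k) :=
  (Dmat k q α β n).mulVecLin

open Matrix

section master
variable {k : Type} [Field k] (q α β : k) (n : ℕ)

lemma dcol0 (i : Fin n) (j : Fin (n+1)) (b : Fin 4) :
    Dmat k q α β n (j, b) (i, 0) =
      if b = 1 ∧ (j:ℕ) = (i:ℕ) then 1 + (-1:k)^n * q^(i:ℕ) * α
      else if b = 2 ∧ (j:ℕ) = (i:ℕ)+1 then q^(n-(i:ℕ)-1) + (-1:k)^n * β else 0 := by
  fin_cases b <;> simp [Dmat]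

lemma dcol1 (i : Fin n) (j : Fin (n+1)) (b : Fin 4) :
    Dmat k q α β n (j, b) (i, 1) =
      if b = 3 ∧ (j:ℕ) = (i:ℕ)+1 then q^(n-(i:ℕ)-1) + (-1:k)^(n+1) * q * β else 0 := by
  fin_cases b <;> simp [Dmat]

lemma dcol2 (i : Fin n) (j : Fin (n+1)) (b : Fin 4) :
    Dmat k q α β n (j, b) (i, 2) =
      if b = 3 ∧ (j:ℕ) = (i:ℕ) then -q + (-1:k)^n * q^(i:ℕ) * α else 0 := by
  fin_cases b <;> simp [Dmat]

lemma dcol3 (i : Fin n) (j : Fin (n+1)) (b : Fin 4) :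
    Dmat k q α β n (j, b) (i, 3) = 0 := by
  fin_cases b <;> simp [Dmat]

/-- the spanning family -/
def Fam (P : Fin (n+1) → Prop) :
    (Fin n ⊕ {j : Fin (n+1) // P j}) → (Fin (n+1) × Fin 4 → k) :=
  Sum.elim (fun i jb => Dmat k q α β n jb (i, 0))
    (fun j jb => if jb = (j.1, (3 : Fin 4)) then (1:k) else 0)

lemma fam_indep (P : Fin (n+1) → Prop) [DecidablePred P]
    (hA : ∀ i : Fin n,
      ¬(1 + (-1:k)^n * q^(i:ℕ) * α = 0 ∧ q^(n-(i:ℕ)-1) + (-1:k)^n * β = 0)) :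
    LinearIndependent k (Fam q α β n P) := by
  rw [Fintype.linearIndependent_iff]
  intro g hg
  have key : ∀ jb : Fin (n+1) × Fin 4,
      (∑ i : Fin n, g (Sum.inl i) * Fam q α β n P (Sum.inl i) jb)
      + (∑ x : {j : Fin (n+1) // P j}, g (Sum.inr x) * Fam q α β n P (Sum.inr x) jb) = 0 := by
    intro jb
    have h := congrFun hg jb
    simpa [Finset.sum_apply, Fintype.sum_sum_type] using h
  rintro (i | ⟨j, hj⟩)
  · have s2a : ∑ x : {j : Fin (n+1) // P j},
        g (Sum.inr x) * Fam q α β n P (Sum.inr x) (i.castSucc, (1:Fin 4)) = 0 :=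
      Finset.sum_eq_zero fun x _ => by simp [Fam]
    have s2b : ∑ x : {j : Fin (n+1) // P j},
        g (Sum.inr x) * Fam q α β n P (Sum.inr x) (i.succ, (2:Fin 4)) = 0 :=
      Finset.sum_eq_zero fun x _ => by simp [Fam]
    have s1a : ∑ i' : Fin n, g (Sum.inl i') * Fam q α β n P (Sum.inl i') (i.castSucc, (1:Fin 4))
        = g (Sum.inl i) * (1 + (-1:k)^n * q^(i:ℕ) * α) := by
      rw [Finset.sum_eq_single i]
      · simp [Fam, dcol0]
      · intro b _ hb
        have hb' : ¬((i.castSucc : ℕ) = (b:ℕ)) := fun h => hb (Fin.ext (by simpa using h.symm))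
        simp only [Fam, Sum.elim_inl, dcol0, hb', and_false, if_false]
        simp
      · intro h; exact absurd (Finset.mem_univ i) h
    have s1b : ∑ i' : Fin n, g (Sum.inl i') * Fam q α β n P (Sum.inl i') (i.succ, (2:Fin 4))
        = g (Sum.inl i) * (q^(n-(i:ℕ)-1) + (-1:k)^n * β) := by
      rw [Finset.sum_eq_single i]
      · simp [Fam, dcol0]
      · intro b _ hb
        have hb' : ¬((i.succ : ℕ) = (b:ℕ) + 1) := fun h => hb (Fin.ext (by
          simp only [Fin.val_succ] at h; omega))
        simp only [Fam, Sum.elim_inl, dcol0, hb', and_false, if_false]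
        simp
      · intro h; exact absurd (Finset.mem_univ i) h
    have k1 := key (i.castSucc, (1:Fin 4)); rw [s1a, s2a, add_zero] at k1
    have k2 := key (i.succ, (2:Fin 4)); rw [s1b, s2b, add_zero] at k2
    rcases mul_eq_zero.1 k1 with h | h
    · exact h
    · rcases mul_eq_zero.1 k2 with h2 | h2
      · exact h2
      · exact absurd ⟨h, h2⟩ (hA i)
  · have s1 : ∑ i' : Fin n, g (Sum.inl i') * Fam q α β n P (Sum.inl i') (j, (3:Fin 4)) = 0 :=
      Finset.sum_eq_zero fun b _ => by
        simp only [Fam, Sum.elim_inl, dcol0]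
        simp
    have s2 : ∑ x : {j : Fin (n+1) // P j},
        g (Sum.inr x) * Fam q α β n P (Sum.inr x) (j, (3:Fin 4)) = g (Sum.inr ⟨j, hj⟩) := by
      rw [Finset.sum_eq_single (⟨j, hj⟩ : {j : Fin (n+1) // P j})]
      · simp [Fam]
      · intro x _ hx
        have hx' : ¬(j = x.1) := fun h => hx (Subtype.ext h.symm)
        simp [Fam, hx', Prod.ext_iff]
      · intro h; exact absurd (Finset.mem_univ _) h
    have k3 := key (j, (3:Fin 4)); rw [s1, s2, zero_add] at k3
    exact k3

lemma fam_span (P : Fin (n+1) → Prop) [DecidablePred P]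
    (hC : ∀ i : Fin n, q^(n-(i:ℕ)-1) + (-1:k)^(n+1) * q * β ≠ 0 → P i.succ)
    (hE : ∀ i : Fin n, -q + (-1:k)^n * q^(i:ℕ) * α ≠ 0 → P i.castSucc)
    (hup : ∀ j : Fin (n+1), P j →
      ∃ i : Fin n, (i.succ = j ∧ q^(n-(i:ℕ)-1) + (-1:k)^(n+1) * q * β ≠ 0)
        ∨ (i.castSucc = j ∧ -q + (-1:k)^n * q^(i:ℕ) * α ≠ 0)) :
    Submodule.span k (Set.range (Dmat k q α β n)ᵀ)
      = Submodule.span k (Set.range (Fam q α β n P)) := by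
  apply le_antisymm <;> rw [Submodule.span_le]
  · rintro _ ⟨⟨i, b⟩, rfl⟩
    have h0 : (Dmat k q α β n)ᵀ (i, (0:Fin 4)) ∈ Submodule.span k (Set.range (Fam q α β n P)) :=
      Submodule.subset_span ⟨Sum.inl i, rfl⟩
    have h1 : (Dmat k q α β n)ᵀ (i, (1:Fin 4)) ∈ Submodule.span k (Set.range (Fam q α β n P)) := by
      by_cases hCi : q^(n-(i:ℕ)-1) + (-1:k)^(n+1) * q * β = 0
      · have hz : (Dmat k q α β n)ᵀ (i, (1:Fin 4)) = 0 := by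
          funext jb
          obtain ⟨jj, bb⟩ := jb
          show Dmat k q α β n (jj, bb) (i, 1) = _
          rw [dcol1, hCi]
          simp
        rw [hz]; exact zero_mem _
      · have hP := hC i hCi
        have hz : (Dmat k q α β n)ᵀ (i, (1:Fin 4))
            = (q^(n-(i:ℕ)-1) + (-1:k)^(n+1) * q * β) • Fam q α β n P (Sum.inr ⟨i.succ, hP⟩) := by
          funext jb
          obtain ⟨jj, bb⟩ := jb
          show Dmat k q α β n (jj, bb) (i, 1) = _
          rw [dcol1]
          simp only [Fam, Sum.elim_inr, Pi.smul_apply, smul_eq_mul, mul_ite, mul_one, mul_zero]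
          congr 1
          simp [Prod.ext_iff, Fin.ext_iff, and_comm]
        rw [hz]
        exact Submodule.smul_mem _ _ (Submodule.subset_span ⟨Sum.inr ⟨i.succ, hP⟩, rfl⟩)
    have h2 : (Dmat k q α β n)ᵀ (i, (2:Fin 4)) ∈ Submodule.span k (Set.range (Fam q α β n P)) := by
      by_cases hEi : -q + (-1:k)^n * q^(i:ℕ) * α = 0
      · have hz : (Dmat k q α β n)ᵀ (i, (2:Fin 4)) = 0 := by
          funext jb
          obtain ⟨jj, bb⟩ := jb
          show Dmat k q α β n (jj, bb) (i, 2) = _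
          rw [dcol2, hEi]
          simp
        rw [hz]; exact zero_mem _
      · have hP := hE i hEi
        have hz : (Dmat k q α β n)ᵀ (i, (2:Fin 4))
            = (-q + (-1:k)^n * q^(i:ℕ) * α) • Fam q α β n P (Sum.inr ⟨i.castSucc, hP⟩) := by
          funext jb
          obtain ⟨jj, bb⟩ := jb
          show Dmat k q α β n (jj, bb) (i, 2) = _
          rw [dcol2]
          simp only [Fam, Sum.elim_inr, Pi.smul_apply, smul_eq_mul, mul_ite, mul_one, mul_zero]
          congr 1
          simp [Prod.ext_iff, Fin.ext_iff, and_comm]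
        rw [hz]
        exact Submodule.smul_mem _ _ (Submodule.subset_span ⟨Sum.inr ⟨i.castSucc, hP⟩, rfl⟩)
    have h3 : (Dmat k q α β n)ᵀ (i, (3:Fin 4)) ∈ Submodule.span k (Set.range (Fam q α β n P)) := by
      have hz : (Dmat k q α β n)ᵀ (i, (3:Fin 4)) = 0 := by
        funext jb
        obtain ⟨jj, bb⟩ := jb
        show Dmat k q α β n (jj, bb) (i, 3) = _
        rw [dcol3]
        simp
      rw [hz]; exact zero_mem _
    fin_cases b
    exacts [h0, h1, h2, h3]
  · rintro _ ⟨(i | ⟨j, hj⟩), rfl⟩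
    · exact Submodule.subset_span ⟨(i, 0), rfl⟩
    · obtain ⟨i, hcase⟩ := hup j hj
      rcases hcase with ⟨rfl, hCi⟩ | ⟨rfl, hEi⟩
      · have hz : Fam q α β n P (Sum.inr ⟨i.succ, hj⟩)
            = (q^(n-(i:ℕ)-1) + (-1:k)^(n+1) * q * β)⁻¹ • (Dmat k q α β n)ᵀ (i, (1:Fin 4)) := by
          funext jb
          obtain ⟨jj, bb⟩ := jb
          show _ = _ * Dmat k q α β n (jj, bb) (i, 1)
          rw [dcol1]
          simp only [Fam, Sum.elim_inr, mul_ite, mul_zero]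
          rw [inv_mul_cancel₀ hCi]
          congr 1
          simp [Prod.ext_iff, Fin.ext_iff, and_comm]
        rw [hz]
        exact Submodule.smul_mem _ _ (Submodule.subset_span ⟨(i, 1), rfl⟩)
      · have hz : Fam q α β n P (Sum.inr ⟨i.castSucc, hj⟩)
            = (-q + (-1:k)^n * q^(i:ℕ) * α)⁻¹ • (Dmat k q α β n)ᵀ (i, (2:Fin 4)) := by
          funext jb
          obtain ⟨jj, bb⟩ := jb
          show _ = _ * Dmat k q α β n (jj, bb) (i, 2)
          rw [dcol2]
          simp only [Fam, Sum.elim_inr, mul_ite, mul_zero]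
          rw [inv_mul_cancel₀ hEi]
          congr 1
          simp [Prod.ext_iff, Fin.ext_iff, and_comm]
        rw [hz]
        exact Submodule.smul_mem _ _ (Submodule.subset_span ⟨(i, 2), rfl⟩)

lemma rank_master (P : Fin (n+1) → Prop) [DecidablePred P]
    (hA : ∀ i : Fin n,
      ¬(1 + (-1:k)^n * q^(i:ℕ) * α = 0 ∧ q^(n-(i:ℕ)-1) + (-1:k)^n * β = 0))
    (hC : ∀ i : Fin n, q^(n-(i:ℕ)-1) + (-1:k)^(n+1) * q * β ≠ 0 → P i.succ)
    (hE : ∀ i : Fin n, -q + (-1:k)^n * q^(i:ℕ) * α ≠ 0 → P i.castSucc)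
    (hup : ∀ j : Fin (n+1), P j →
      ∃ i : Fin n, (i.succ = j ∧ q^(n-(i:ℕ)-1) + (-1:k)^(n+1) * q * β ≠ 0)
        ∨ (i.castSucc = j ∧ -q + (-1:k)^n * q^(i:ℕ) * α ≠ 0)) :
    Module.finrank k ↥(LinearMap.range (dMap k q α β n))
      = n + Fintype.card {j : Fin (n+1) // P j} := by
  rw [dMap, Matrix.range_mulVecLin]
  change Module.finrank k ↥(Submodule.span k (Set.range (Dmat k q α β n)ᵀ)) = _
  rw [fam_span q α β n P hC hE hup,
    finrank_span_eq_card (fam_indep q α β n P hA), Fintype.card_sum, Fintype.card_fin]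

end master


section scalars
variable {k : Type} [Field k] {q : k}

lemma pow_inj' (hq : q ≠ 0) (hq' : ∀ m : ℕ, 0 < m → q ^ m ≠ 1) {a b : ℕ}
    (h : q ^ a = q ^ b) : a = b := by
  rcases le_total a b with hab | hab
  · by_contra hne
    have h2 : q ^ a * q ^ (b - a) = q ^ a * 1 := by
      rw [← pow_add, Nat.add_sub_cancel' hab, mul_one, h]
    exact hq' (b - a) (by omega) (mul_left_cancel₀ (pow_ne_zero a hq) h2)
  · by_contra hne
    have h2 : q ^ b * q ^ (a - b) = q ^ b * 1 := by
      rw [← pow_add, Nat.add_sub_cancel' hab, mul_one, h]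
    exact hq' (a - b) (by omega) (mul_left_cancel₀ (pow_ne_zero b hq) h2)

lemma neg_one_pow_sq (n : ℕ) : (-1:k)^n * (-1:k)^n = 1 := by
  rw [← pow_add]; exact Even.neg_one_pow ⟨n, rfl⟩

lemma alpha_mul (hq : q ≠ 0) (t : ℕ) : q ^ (-(t:ℤ)) * q ^ t = 1 := by
  rw [← zpow_natCast q t, ← zpow_add₀ hq, neg_add_cancel, zpow_zero]

/-- S1: column-0 coefficients not both zero when `n ≥ 2t+2`. -/
lemma S1 (hq : q ≠ 0) (hq' : ∀ m : ℕ, 0 < m → q ^ m ≠ 1) {t n i : ℕ}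
    (hn : 2*t+2 ≤ n) (hi : i < n) :
    ¬(1 + (-1:k)^n * q^i * q^(-(t:ℤ)) = 0 ∧ q^(n-i-1) + (-1:k)^n * q^t = 0) := by
  rintro ⟨h1, h2⟩
  set s : k := (-1:k)^n with hsdef
  set a : k := q^(-(t:ℤ)) with hadef
  have hs : s * s = 1 := neg_one_pow_sq n
  have ha : a * q ^ t = 1 := alpha_mul hq t
  have e1 : s * q ^ i = -q ^ t := by linear_combination q^t * h1 - s * q^i * ha
  have e2 : s * q ^ (n-i-1) = -q ^ t := by linear_combination s * h2 - q^t * hs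
  have e3 : q ^ i = q ^ (n-i-1) :=
    mul_left_cancel₀ (by rw [hsdef]; exact pow_ne_zero _ (by norm_num : (-1:k) ≠ 0))
      (e1.trans e2.symm)
  have hi2 : i = n - i - 1 := pow_inj' hq hq' e3
  have hs1 : s = -1 := Odd.neg_one_pow ⟨i, by omega⟩
  have e4 : q ^ i = q ^ t := by rw [hs1] at e1; linear_combination -e1
  have := pow_inj' hq hq' e4
  omega

/-- S2: `Eᵢ ≠ 0` when `i ≠ t+1`. -/
lemma S2 (hq : q ≠ 0) (hq' : ∀ m : ℕ, 0 < m → q ^ m ≠ 1) {t n i : ℕ} (hi : i ≠ t+1) :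
    -q + (-1:k)^n * q^i * q^(-(t:ℤ)) ≠ 0 := by
  intro h
  set s : k := (-1:k)^n with hsdef
  set a : k := q^(-(t:ℤ)) with hadef
  have hs : s * s = 1 := neg_one_pow_sq n
  have ha : a * q ^ t = 1 := alpha_mul hq t
  have e1 : s * q ^ i = q ^ (t+1) := by
    linear_combination q^t * h - s * q^i * ha
  have e2 : q ^ (i+i) = q ^ ((t+1)+(t+1)) := by
    linear_combination (s * q^i + q^(t+1)) * e1 - q^(i+i) * hs
  have := pow_inj' hq hq' e2
  omega

/-- S3: `Cᵢ ≠ 0` when `n-i-1 ≠ t+1`. -/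
lemma S3 (hq : q ≠ 0) (hq' : ∀ m : ℕ, 0 < m → q ^ m ≠ 1) {t n i : ℕ} (hi : n-i-1 ≠ t+1) :
    q^(n-i-1) + (-1:k)^(n+1) * q * q^t ≠ 0 := by
  intro h
  set s : k := (-1:k)^(n+1) with hsdef
  have hs : s * s = 1 := neg_one_pow_sq (n+1)
  have e1 : q ^ (n-i-1) = -(s * q^(t+1)) := by linear_combination h
  have e2 : q ^ ((n-i-1)+(n-i-1)) = q ^ ((t+1)+(t+1)) := by
    linear_combination (q^(n-i-1) - s*q^(t+1)) * e1 + q^(t+1)*q^(t+1) * hs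
  have := pow_inj' hq hq' e2
  omega

/-- S5: `C_t = 0` at level `n = 2t+2`. -/
lemma S5 (hq : q ≠ 0) {t n i : ℕ} (hn : n = 2*t+2) (hi : i = t) :
    q^(n-i-1) + (-1:k)^(n+1) * q * q^t = 0 := by
  subst hn
  have hodd : (-1:k)^(2*t+2+1) = -1 := Odd.neg_one_pow ⟨t+1, by ring⟩
  rw [hodd, show 2*t+2-i-1 = t+1 by omega]; ring

/-- S6: `E_{t+1} = 0` at level `n = 2t+2`. -/
lemma S6 (hq : q ≠ 0) {t n i : ℕ} (hn : n = 2*t+2) (hi : i = t+1) :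
    -q + (-1:k)^n * q^i * q^(-(t:ℤ)) = 0 := by
  subst hn
  have heven : (-1:k)^(2*t+2) = 1 := Even.neg_one_pow ⟨t+1, by ring⟩
  rw [heven, show i = t+1 from hi]
  have ha : q^(-(t:ℤ)) * q ^ t = 1 := alpha_mul hq t
  linear_combination q * ha

end scalars


section apps
variable {k : Type} [Field k] {q : k}

lemma rank_nullity (q α β : k) (n : ℕ) :
    Module.finrank k ↥(LinearMap.range (dMap k q α β n))
      + Module.finrank k ↥(LinearMap.ker (dMap k q α β n)) = 4 * n := by
  have h := LinearMap.finrank_range_add_finrank_ker (dMap k q α β n)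
  rw [Module.finrank_fintype_fun_eq_card, Fintype.card_prod, Fintype.card_fin,
    Fintype.card_fin] at h
  omega

lemma rank_generic (hq : q ≠ 0) (hq' : ∀ m : ℕ, 0 < m → q ^ m ≠ 1) {t n : ℕ}
    (hn : 2*t+3 ≤ n) :
    Module.finrank k ↥(LinearMap.range (dMap k q (q^(-(t:ℤ))) (q^t) n)) = 2*n+1 := by
  have h := rank_master q (q^(-(t:ℤ))) (q^t) n (fun _ => True)
    (fun i => S1 hq hq' (by omega) i.isLt)
    (fun _ _ => trivial) (fun _ _ => trivial) ?_
  · rw [h, Fintype.card_congr (Equiv.subtypeUnivEquiv fun _ => trivial), Fintype.card_fin]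
    omega
  · intro j _
    by_cases hj0 : (j:ℕ) = 0
    · exact ⟨⟨0, by omega⟩, Or.inr ⟨Fin.ext (by simp [hj0]),
        S2 hq hq' (by show (0:ℕ) ≠ t+1; omega)⟩⟩
    · have hjn : (j:ℕ) ≤ n := by omega
      by_cases hCc : n - ((j:ℕ)-1) - 1 = t+1
      · have hjlt : (j:ℕ) < n := by omega
        refine ⟨⟨(j:ℕ), hjlt⟩, Or.inr ⟨Fin.ext (by simp),
          S2 hq hq' (by show (j:ℕ) ≠ t+1; omega)⟩⟩
      · refine ⟨⟨(j:ℕ)-1, by omega⟩, Or.inl ⟨Fin.ext (by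
          show ((j:ℕ)-1)+1 = (j:ℕ); omega),
          S3 hq hq' (by show n - ((j:ℕ)-1) - 1 ≠ t+1; omega)⟩⟩

lemma rank_special (hq : q ≠ 0) (hq' : ∀ m : ℕ, 0 < m → q ^ m ≠ 1) (t : ℕ) :
    Module.finrank k ↥(LinearMap.range (dMap k q (q^(-(t:ℤ))) (q^t) (2*t+2))) = 4*t+4 := by
  have h := rank_master q (q^(-(t:ℤ))) (q^t) (2*t+2) (fun j => ¬((j:ℕ) = t+1))
    (fun i => S1 hq hq' (by omega) i.isLt)
    (fun i hCi heq => hCi (S5 hq rfl (by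
      simp only [Fin.val_succ] at heq; omega)))
    (fun i hEi heq => hEi (S6 hq rfl (by simpa using heq)))
    ?_
  · rw [h]
    have h1 : Fintype.card {j : Fin (2*t+2+1) // (j:ℕ) = t+1} = 1 :=
      Fintype.card_eq_one_iff.mpr ⟨⟨⟨t+1, by omega⟩, rfl⟩,
        fun y => Subtype.ext (Fin.ext y.2)⟩
    rw [Fintype.card_subtype_compl, h1, Fintype.card_fin]
    omega
  · intro j hj
    by_cases hj0 : (j:ℕ) = 0
    · exact ⟨⟨0, by omega⟩, Or.inr ⟨Fin.ext (by simp [hj0]),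
        S2 hq hq' (by show (0:ℕ) ≠ t+1; omega)⟩⟩
    · have hjn : (j:ℕ) ≤ 2*t+2 := by omega
      refine ⟨⟨(j:ℕ)-1, by omega⟩, Or.inl ⟨Fin.ext (by
        show ((j:ℕ)-1)+1 = (j:ℕ); omega),
        S3 hq hq' (by show 2*t+2 - ((j:ℕ)-1) - 1 ≠ t+1; omega)⟩⟩

end apps


/-- for each `t ∈ ℕ`, let `ψ_t(x) = q^{−t}x`, `ψ_t(y) = q^t y` and let
`dₙ^{(t)}` be the corresponding differential (parameters `α = q^{−t}`, `β = q^t`).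
Then `Dₙ := dim Ker d_{n+1}^{(t)} − dim Im dₙ^{(t)} = dim HHⁿ(Λ, M_t)` satisfies
`D_{2t+2} ≠ 0` but `Dₙ = 0` for all `n > 2t+2`; hence
`Ext_{Λᵉ}ⁿ(Λ, M_t) = 0` for `n > 2t+2` while `Ext_{Λᵉ}^{2t+2}(Λ, M_t) ≠ 0`,
contradicting Auslander's conjecture for `Λᵉ`. -/
theorem stmt17 (k : Type) [Field k] (q : k) (hq : q ≠ 0)
    (hq' : ∀ m : ℕ, 0 < m → q ^ m ≠ 1) (t : ℕ) :
    Module.finrank k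
        ↥(LinearMap.ker (dMap k q (q ^ (-(t : ℤ))) (q ^ t) (2 * t + 2 + 1))) ≠
      Module.finrank k
        ↥(LinearMap.range (dMap k q (q ^ (-(t : ℤ))) (q ^ t) (2 * t + 2))) ∧
    ∀ n : ℕ, 2 * t + 2 < n →
      Module.finrank k
          ↥(LinearMap.ker (dMap k q (q ^ (-(t : ℤ))) (q ^ t) (n + 1))) =
        Module.finrank k
          ↥(LinearMap.range (dMap k q (q ^ (-(t : ℤ))) (q ^ t) n)) := by
  constructor
  · have h1 : (2:ℕ)*t+3 ≤ 2*t+2+1 := by omega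
    have hg := rank_generic hq hq' h1
    have hs := rank_special hq hq' t
    have hrn := rank_nullity q (q^(-(t:ℤ))) (q^t) (2*t+2+1)
    omega
  · intro n hn
    have hg1 := rank_generic hq hq' (show 2*t+3 ≤ n by omega)
    have hg2 := rank_generic hq hq' (show 2*t+3 ≤ n+1 by omega)
    have hrn := rank_nullity q (q^(-(t:ℤ))) (q^t) (n+1)
    omega
end

section
/- Let ψ be the automorphism of Λ with ψ(x) = q⁻¹x and ψ(y) = βy where β ∉ {±qⁱ : i ∈ ℤ}. Then Ext_{Λᵉ}ⁿ(Λ, ₁Λ_ψ) = 0 for all n > 0, while Ext_{Λᵉ}ⁿ(Λ, ₁Λ_{ψ⁻¹}) ≠ 0 for all n > 0 (its dimension is 1 if char k ≠ 2 and 2 if char k = 2). Since Ext_{Λᵉ}ⁿ(Λ, ₁Λ_{ψ⁻¹}) ≅ Ext_{Λᵉ}ⁿ(₁Λ_ψ, Λ), symmetry of Ext-vanishing fails over Λᵉ. (Equivalently, in terms of the explicit complexes: the complex for (α,β) = (q⁻¹, β) has Ker d_{n+1} = Im dₙ for all n ≥ 1, whereas the complex for (α,β) = (q, β⁻¹) has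 dim Ker d_{n+1} − dim Im dₙ ≥ 1 for all n ≥ 1.) -/
open Matrix Submodule Module

section aux
variable {k : Type} [Field k] (q α β : k)

def Ac (n i : ℕ) : k := 1 + (-1 : k) ^ n * q ^ i * α
def Bc (n i : ℕ) : k := q ^ (n - i - 1) + (-1 : k) ^ n * β
def Cc (n i : ℕ) : k := q ^ (n - i - 1) + (-1 : k) ^ (n + 1) * q * β
def Ec (n i : ℕ) : k := -q + (-1 : k) ^ n * q ^ i * α

lemma col0 (n : ℕ) (i : Fin n) : (Dmat k q α β n)ᵀ (i, 0) =
    Pi.single (i.castSucc, (1 : Fin 4)) (Ac q α n i)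
      + Pi.single (i.succ, (2 : Fin 4)) (Bc q β n i) := by
  funext jb
  obtain ⟨j, b⟩ := jb
  fin_cases b <;>
    simp [Dmat, Ac, Bc, Pi.single_apply, Prod.ext_iff, Fin.ext_iff] <;>
    split_ifs <;> simp_all <;> omega

lemma col1 (n : ℕ) (i : Fin n) : (Dmat k q α β n)ᵀ (i, 1) =
    Pi.single (i.succ, (3 : Fin 4)) (Cc q β n i) := by
  funext jb
  obtain ⟨j, b⟩ := jb
  fin_cases b <;>
    simp [Dmat, Cc, Pi.single_apply, Prod.ext_iff, Fin.ext_iff] <;>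
    split_ifs <;> simp_all <;> omega

lemma col2 (n : ℕ) (i : Fin n) : (Dmat k q α β n)ᵀ (i, 2) =
    Pi.single (i.castSucc, (3 : Fin 4)) (Ec q α n i) := by
  funext jb
  obtain ⟨j, b⟩ := jb
  fin_cases b <;>
    simp [Dmat, Ec, Pi.single_apply, Prod.ext_iff, Fin.ext_iff] <;>
    split_ifs <;> simp_all <;> omega

lemma col3 (n : ℕ) (i : Fin n) : (Dmat k q α β n)ᵀ (i, 3) = 0 := by
  funext jb
  obtain ⟨j, b⟩ := jb
  fin_cases b <;> simp [Dmat]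

end aux
section aux2
variable {k : Type} [Field k] (q α β : k)

lemma key_id (m i : ℕ) (h : i < m) :
    Cc q β (m + 1) i * Ac q α m i + Ec q α (m + 1) (i + 1) * Bc q β m i = 0 := by
  obtain ⟨d, rfl⟩ : ∃ d, m = i + 1 + d := ⟨m - i - 1, by omega⟩
  simp only [Ac, Bc, Cc, Ec,
    show i + 1 + d + 1 - i - 1 = d + 1 from by omega,
    show i + 1 + d - i - 1 = d from by omega]
  ring

lemma im_le_ker (m : ℕ) :
    LinearMap.range (dMap k q α β m) ≤ LinearMap.ker (dMap k q α β (m + 1)) := by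
  rw [dMap, Matrix.range_mulVecLin, Submodule.span_le]
  rintro _ ⟨⟨i, a⟩, rfl⟩
  simp only [SetLike.mem_coe, LinearMap.mem_ker, dMap, Matrix.mulVecLin_apply]
  fin_cases a
  · show Dmat k q α β (m+1) *ᵥ (Dmat k q α β m)ᵀ (i, 0) = 0
    rw [col0 q α β m i]
    rw [Matrix.mulVec_add]
    rw [Matrix.mulVec_single, Matrix.mulVec_single]
    have h1 : (fun jb => Dmat k q α β (m+1) jb (i.castSucc, 1) * Ac q α m i)
        = Pi.single (i.castSucc.succ, (3 : Fin 4)) (Cc q β (m+1) i.castSucc * Ac q α m i) := by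
      have := col1 q α β (m+1) i.castSucc
      funext jb; rw [show Dmat k q α β (m+1) jb (i.castSucc, 1) = (Dmat k q α β (m+1))ᵀ (i.castSucc,1) jb from rfl, this]
      simp [Pi.single_apply, ite_mul]
    have h2 : (fun jb => Dmat k q α β (m+1) jb (i.succ, 2) * Bc q β m i)
        = Pi.single (i.succ.castSucc, (3 : Fin 4)) (Ec q α (m+1) i.succ * Bc q β m i) := by
      have := col2 q α β (m+1) i.succ
      funext jb; rw [show Dmat k q α β (m+1) jb (i.succ, 2) = (Dmat k q α β (m+1))ᵀ (i.succ,2) jb from rfl, this]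
      simp [Pi.single_apply, ite_mul]
    rw [show MulOpposite.op (Ac q α m i) • (Dmat k q α β (m + 1)).col (i.castSucc, 1) = (fun jb => Dmat k q α β (m+1) jb (i.castSucc, 1) * Ac q α m i) from rfl,
      show MulOpposite.op (Bc q β m i) • (Dmat k q α β (m + 1)).col (i.succ, 2) = (fun jb => Dmat k q α β (m+1) jb (i.succ, 2) * Bc q β m i) from rfl]
    rw [h1, h2, show i.castSucc.succ = i.succ.castSucc from rfl, ← Pi.single_add]
    have := key_id q α β m i i.2
    simp only [Fin.coe_castSucc, Fin.val_succ]
    rw [show Cc q β (m+1) (i:ℕ) * Ac q α m (i:ℕ) + Ec q α (m+1) ((i:ℕ)+1) * Bc q β m (i:ℕ) = 0 from this]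
    simp
  · show Dmat k q α β (m+1) *ᵥ (Dmat k q α β m)ᵀ (i, 1) = 0
    rw [col1 q α β m i, Matrix.mulVec_single]
    funext jb
    have := congrFun (col3 q α β (m+1) i.succ) jb
    simp only [Matrix.transpose_apply] at this
    simp [this]
  · show Dmat k q α β (m+1) *ᵥ (Dmat k q α β m)ᵀ (i, 2) = 0
    rw [col2 q α β m i, Matrix.mulVec_single]
    funext jb
    have := congrFun (col3 q α β (m+1) i.castSucc) jb
    simp only [Matrix.transpose_apply] at this
    simp [this]
  · show Dmat k q α β (m+1) *ᵥ (Dmat k q α β m)ᵀ (i, 3) = 0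
    rw [col3 q α β m i]
    simp
end aux2
section aux3
variable {k : Type} [Field k] (q α β : k)

lemma single_smul_one {ι : Type} [DecidableEq ι] (p : ι) (c : k) :
    (Pi.single p c : ι → k) = c • (Pi.single p 1 : ι → k) := by
  funext x; by_cases h : x = p <;> simp [h, Pi.single_apply]

lemma rank_full (m : ℕ) (hm : 1 ≤ m)
    (hB : ∀ i : Fin m, Bc q β m i ≠ 0) (hC : ∀ i : Fin m, Cc q β m i ≠ 0)
    (hE0 : Ec q α m 0 ≠ 0) :
    finrank k ↥(LinearMap.range (dMap k q α β m)) = 2 * m + 1 := by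
  classical
  set v : (Fin m ⊕ Fin (m + 1)) → (Fin (m + 1) × Fin 4 → k) := fun s =>
    Sum.rec (fun i => Pi.single (i.castSucc, (1 : Fin 4)) (Ac q α m i)
        + Pi.single (i.succ, (2 : Fin 4)) (Bc q β m i))
      (fun j => Pi.single (j, (3 : Fin 4)) 1) s with hv
  have hspan : LinearMap.range (dMap k q α β m) = span k (Set.range v) := by
    rw [dMap, Matrix.range_mulVecLin]
    apply le_antisymm
    · rw [span_le]
      rintro _ ⟨⟨i, a⟩, rfl⟩
      fin_cases a
      · show (Dmat k q α β m)ᵀ (i, 0) ∈ _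
        rw [col0 q α β m i]
        exact subset_span ⟨Sum.inl i, rfl⟩
      · show (Dmat k q α β m)ᵀ (i, 1) ∈ _
        rw [col1 q α β m i, single_smul_one]
        exact smul_mem _ _ (subset_span ⟨Sum.inr i.succ, rfl⟩)
      · show (Dmat k q α β m)ᵀ (i, 2) ∈ _
        rw [col2 q α β m i, single_smul_one]
        exact smul_mem _ _ (subset_span ⟨Sum.inr i.castSucc, rfl⟩)
      · show (Dmat k q α β m)ᵀ (i, 3) ∈ _
        rw [col3 q α β m i]; exact zero_mem _
    · rw [span_le]
      rintro _ ⟨s, rfl⟩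
      cases s with
      | inl i =>
        have : v (Sum.inl i) = (Dmat k q α β m)ᵀ (i, 0) := (col0 q α β m i).symm
        rw [this]; exact subset_span ⟨(i, 0), rfl⟩
      | inr j =>
        induction j using Fin.cases with
        | zero =>
          have h0 : v (Sum.inr 0) = (Ec q α m 0)⁻¹ • (Dmat k q α β m)ᵀ (⟨0, hm⟩, 2) := by
            rw [col2, show (⟨0, hm⟩ : Fin m).castSucc = (0 : Fin (m+1)) from rfl,
              single_smul_one, smul_smul, inv_mul_cancel₀ (by exact hE0)]
            simp [hv]
          rw [h0]
          exact smul_mem _ _ (subset_span ⟨(⟨0, hm⟩, 2), rfl⟩)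
        | succ j' =>
          have h0 : v (Sum.inr j'.succ) = (Cc q β m j')⁻¹ • (Dmat k q α β m)ᵀ (j', 1) := by
            rw [col1, single_smul_one, smul_smul, inv_mul_cancel₀ (hC j')]
            simp [hv]
          rw [h0]
          exact smul_mem _ _ (subset_span ⟨(j', 1), rfl⟩)
  have hli : LinearIndependent k v := by
    rw [Fintype.linearIndependent_iff]
    intro g hg
    have heval : ∀ p, (∑ s, g s • v s) p = 0 := fun p => by rw [hg]; rfl
    have hr : ∀ j : Fin (m + 1), g (Sum.inr j) = 0 := by
      intro j
      have h := heval (j, 3)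
      rw [Finset.sum_apply] at h
      simpa [hv, Fintype.sum_sum_type, Pi.single_apply, Prod.ext_iff] using h
    intro s
    cases s with
    | inr j => exact hr j
    | inl i =>
      have h := heval (i.succ, 2)
      rw [Finset.sum_apply] at h
      simp [hv, Fintype.sum_sum_type, Pi.single_apply, Prod.ext_iff, Fin.succ_inj] at h
      rcases h with h | h
      · exact h
      · exact absurd h (hB i)
  rw [hspan, finrank_span_eq_card hli]
  simp; omega

end aux3
section aux4
variable {k : Type} [Field k] (q α β : k)

lemma rank_def (m : ℕ) (hm : 1 ≤ m)
    (hB : ∀ i : Fin m, Bc q β m i ≠ 0) (hC : ∀ i : Fin m, Cc q β m i ≠ 0)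
    (hE0 : Ec q α m 0 = 0) :
    finrank k ↥(LinearMap.range (dMap k q α β m)) = 2 * m := by
  classical
  set v : (Fin m ⊕ Fin m) → (Fin (m + 1) × Fin 4 → k) := fun s =>
    Sum.rec (fun i => Pi.single (i.castSucc, (1 : Fin 4)) (Ac q α m i)
        + Pi.single (i.succ, (2 : Fin 4)) (Bc q β m i))
      (fun j => Pi.single (j.succ, (3 : Fin 4)) 1) s with hv
  have hspan : LinearMap.range (dMap k q α β m) = span k (Set.range v) := by
    rw [dMap, Matrix.range_mulVecLin]
    apply le_antisymm
    · rw [span_le]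
      rintro _ ⟨⟨i, a⟩, rfl⟩
      fin_cases a
      · show (Dmat k q α β m)ᵀ (i, 0) ∈ _
        rw [col0 q α β m i]
        exact subset_span ⟨Sum.inl i, rfl⟩
      · show (Dmat k q α β m)ᵀ (i, 1) ∈ _
        rw [col1 q α β m i, single_smul_one]
        exact smul_mem _ _ (subset_span ⟨Sum.inr i, rfl⟩)
      · show (Dmat k q α β m)ᵀ (i, 2) ∈ _
        rw [col2 q α β m i]
        by_cases hi : (i : ℕ) = 0
        · rw [show Ec q α m (i : ℕ) = 0 from by rw [hi]; exact hE0]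
          rw [Pi.single_zero]
          exact zero_mem _
        · have hj : i.castSucc = (⟨(i : ℕ) - 1, by omega⟩ : Fin m).succ := by
            apply Fin.ext; simp; omega
          rw [hj, single_smul_one]
          exact smul_mem _ _ (subset_span ⟨Sum.inr _, rfl⟩)
      · show (Dmat k q α β m)ᵀ (i, 3) ∈ _
        rw [col3 q α β m i]; exact zero_mem _
    · rw [span_le]
      rintro _ ⟨s, rfl⟩
      cases s with
      | inl i =>
        have : v (Sum.inl i) = (Dmat k q α β m)ᵀ (i, 0) := (col0 q α β m i).symm
        rw [this]; exact subset_span ⟨(i, 0), rfl⟩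
      | inr j =>
        have h0 : v (Sum.inr j) = (Cc q β m j)⁻¹ • (Dmat k q α β m)ᵀ (j, 1) := by
          rw [col1, single_smul_one, smul_smul, inv_mul_cancel₀ (hC j)]
          simp [hv]
        rw [h0]
        exact smul_mem _ _ (subset_span ⟨(j, 1), rfl⟩)
  have hli : LinearIndependent k v := by
    rw [Fintype.linearIndependent_iff]
    intro g hg
    have heval : ∀ p, (∑ s, g s • v s) p = 0 := fun p => by rw [hg]; rfl
    intro s
    cases s with
    | inr j =>
      have h := heval (j.succ, 3)
      rw [Finset.sum_apply] at h
      simpa [hv, Fintype.sum_sum_type, Pi.single_apply, Prod.ext_iff, Fin.succ_inj] using h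
    | inl i =>
      have h := heval (i.succ, 2)
      rw [Finset.sum_apply] at h
      simp [hv, Fintype.sum_sum_type, Pi.single_apply, Prod.ext_iff, Fin.succ_inj] at h
      rcases h with h | h
      · exact h
      · exact absurd h (hB i)
  rw [hspan, finrank_span_eq_card hli]
  simp; ring

lemma ker_finrank (m : ℕ) :
    finrank k ↥(LinearMap.ker (dMap k q α β m)) =
      4 * m - finrank k ↥(LinearMap.range (dMap k q α β m)) := by
  have h := LinearMap.finrank_range_add_finrank_ker (dMap k q α β m)
  have hcard : finrank k (Fin m × Fin 4 → k) = 4 * m := by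
    simp [Module.finrank_pi]; ring
  rw [hcard] at h
  omega

end aux4
section aux5
variable {k : Type} [Field k] {q : k}

lemma ne_B (hq : q ≠ 0) (b : k) (hb : ¬∃ i : ℤ, b = q ^ i ∨ b = -(q ^ i)) (t m : ℕ) :
    q ^ t + (-1 : k) ^ m * b ≠ 0 := by
  intro h
  rcases neg_one_pow_eq_or k m with hs | hs <;> rw [hs] at h
  · exact hb ⟨t, Or.inr (by rw [zpow_natCast]; linear_combination h)⟩
  · exact hb ⟨t, Or.inl (by rw [zpow_natCast]; linear_combination -h)⟩

lemma ne_C (hq : q ≠ 0) (b : k) (hb : ¬∃ i : ℤ, b = q ^ i ∨ b = -(q ^ i)) (t m : ℕ) :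
    q ^ t + (-1 : k) ^ m * q * b ≠ 0 := by
  intro h
  have key : q ^ ((t : ℤ) - 1) = q ^ t / q := by
    rw [zpow_sub₀ hq, zpow_one, zpow_natCast]
  rcases neg_one_pow_eq_or k m with hs | hs <;> rw [hs] at h
  · refine hb ⟨(t : ℤ) - 1, Or.inr ?_⟩
    rw [key, ← neg_div, eq_div_iff hq]
    linear_combination h
  · refine hb ⟨(t : ℤ) - 1, Or.inl ?_⟩
    rw [key, eq_div_iff hq]
    linear_combination -h

lemma hb_inv (hb : ¬∃ i : ℤ, (β : k) = q ^ i ∨ β = -(q ^ i)) :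
    ¬∃ i : ℤ, (β : k)⁻¹ = q ^ i ∨ β⁻¹ = -(q ^ i) := by
  rintro ⟨i, hi | hi⟩
  · exact hb ⟨-i, Or.inl (by rw [← inv_inv β, hi, _root_.zpow_neg])⟩
  · exact hb ⟨-i, Or.inr (by rw [← inv_inv β, hi, inv_neg, _root_.zpow_neg])⟩

lemma e0_part1 (hq : q ≠ 0) (hq' : ∀ m : ℕ, 0 < m → q ^ m ≠ 1) (m : ℕ) :
    Ec q q⁻¹ m 0 ≠ 0 := by
  simp only [Ec, pow_zero]
  intro h
  rcases neg_one_pow_eq_or k m with hs | hs <;> rw [hs] at h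
  · refine hq' 2 (by omega) ?_
    rw [pow_two]
    field_simp at h
    linear_combination -h
  · have h2 : q ^ 2 = -1 := by
      rw [pow_two]
      field_simp at h
      linear_combination -h
    refine hq' 4 (by omega) ?_
    rw [show (4 : ℕ) = 2 * 2 from rfl, pow_mul, h2]
    norm_num

end aux5
section aux6
variable {k : Type} [Field k] {q : k}

lemma char2_neg_one (h : ringChar k = 2) : (-1 : k) = 1 := by
  have h2 : (2 : k) = 0 := by
    have := ringChar.spec k 2
    rw [h] at this
    exact this.mpr dvd_rfl
  linear_combination -h2

lemma charne2_two (h : ringChar k ≠ 2) : (2 : k) ≠ 0 :=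
  fun h2 => h (CharP.ringChar_of_prime_eq_zero Nat.prime_two h2)

lemma e0_part2_zero (h1 : (-1 : k) ^ m = 1) : Ec q q m 0 = 0 := by
  simp only [Ec, pow_zero, h1]
  ring

lemma e0_part2_ne (hq : q ≠ 0) (h2 : (2 : k) ≠ 0) (h1 : (-1 : k) ^ m = -1) :
    Ec q q m 0 ≠ 0 := by
  simp only [Ec, pow_zero, h1]
  intro h
  rcases mul_eq_zero.mp (show (2 : k) * q = 0 from by linear_combination -h) with h' | h'
  · exact h2 h'
  · exact hq h'
end aux6

/-- let `ψ(x) = q⁻¹x`, `ψ(y) = βy` with `β ∉ {±qⁱ : i ∈ ℤ}`. Then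
`Ext_{Λᵉ}ⁿ(Λ, ₁Λ_ψ) = 0` for all `n > 0`, while
`Ext_{Λᵉ}ⁿ(Λ, ₁Λ_{ψ⁻¹}) ≅ Ext_{Λᵉ}ⁿ(₁Λ_ψ, Λ)` is nonzero for all `n > 0`
(of dimension 1 if `char k ≠ 2` and 2 if `char k = 2`), so symmetry of
Ext-vanishing fails over `Λᵉ`. In terms of the explicit complexes: the complex
for `(α,β) = (q⁻¹, β)` has `Ker d_{n+1} = Im dₙ` for all `n ≥ 1`, whereas the
complex for `(α,β) = (q, β⁻¹)` (computing `Ext^*(Λ, ₁Λ_{ψ⁻¹})`) has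
`dim Ker d_{n+1} − dim Im dₙ ≥ 1` for all `n ≥ 1`. -/
theorem stmt19 (k : Type) [Field k] (q β : k) (hq : q ≠ 0)
    (hq' : ∀ m : ℕ, 0 < m → q ^ m ≠ 1) (hβ : β ≠ 0)
    (hBetaSigma : ¬∃ i : ℤ, β = q ^ i ∨ β = -(q ^ i))
    (n : ℕ) (hn : 1 ≤ n) :
    LinearMap.ker (dMap k q q⁻¹ β (n + 1)) =
      LinearMap.range (dMap k q q⁻¹ β n) ∧
    Module.finrank k ↥(LinearMap.ker (dMap k q q β⁻¹ (n + 1))) ≥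
      Module.finrank k ↥(LinearMap.range (dMap k q q β⁻¹ n)) + 1 ∧
    (ringChar k ≠ 2 →
      Module.finrank k ↥(LinearMap.ker (dMap k q q β⁻¹ (n + 1))) =
        Module.finrank k ↥(LinearMap.range (dMap k q q β⁻¹ n)) + 1) ∧
    (ringChar k = 2 →
      Module.finrank k ↥(LinearMap.ker (dMap k q q β⁻¹ (n + 1))) =
        Module.finrank k ↥(LinearMap.range (dMap k q q β⁻¹ n)) + 2) := by
  have hBn : ∀ (m : ℕ) (i : Fin m), Bc q β m (i : ℕ) ≠ 0 := fun m i => by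
    unfold Bc; exact ne_B hq β hBetaSigma _ _
  have hCn : ∀ (m : ℕ) (i : Fin m), Cc q β m (i : ℕ) ≠ 0 := fun m i => by
    unfold Cc; exact ne_C hq β hBetaSigma _ _
  have r1 : ∀ m, 1 ≤ m →
      finrank k ↥(LinearMap.range (dMap k q q⁻¹ β m)) = 2 * m + 1 :=
    fun m hm => rank_full q q⁻¹ β m hm (hBn m) (hCn m) (e0_part1 hq hq' m)
  have k1 : finrank k ↥(LinearMap.ker (dMap k q q⁻¹ β (n + 1))) = 2 * n + 1 := by
    rw [ker_finrank, r1 (n + 1) (by omega)]; omega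
  constructor
  · exact (Submodule.eq_of_le_of_finrank_le (im_le_ker q q⁻¹ β n)
      (by rw [k1, r1 n hn])).symm
  · have hbi := hb_inv hBetaSigma
    have hBn2 : ∀ (m : ℕ) (i : Fin m), Bc q β⁻¹ m (i : ℕ) ≠ 0 := fun m i => by
      unfold Bc; exact ne_B hq β⁻¹ hbi _ _
    have hCn2 : ∀ (m : ℕ) (i : Fin m), Cc q β⁻¹ m (i : ℕ) ≠ 0 := fun m i => by
      unfold Cc; exact ne_C hq β⁻¹ hbi _ _
    by_cases hc : ringChar k = 2
    · have hone : ∀ m : ℕ, (-1 : k) ^ m = 1 := fun m => by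
        rw [char2_neg_one hc, one_pow]
      have rn : finrank k ↥(LinearMap.range (dMap k q q β⁻¹ n)) = 2 * n :=
        rank_def q q β⁻¹ n hn (hBn2 n) (hCn2 n) (e0_part2_zero (hone n))
      have rn1 : finrank k ↥(LinearMap.range (dMap k q q β⁻¹ (n + 1))) = 2 * (n + 1) :=
        rank_def q q β⁻¹ (n + 1) (by omega) (hBn2 (n + 1)) (hCn2 (n + 1))
          (e0_part2_zero (hone (n + 1)))
      have k2 : finrank k ↥(LinearMap.ker (dMap k q q β⁻¹ (n + 1))) = 2 * n + 2 := by
        rw [ker_finrank, rn1]; omega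
      exact ⟨by rw [k2, rn]; omega, fun h => absurd hc h, fun _ => by rw [k2, rn]⟩
    · have h2 := charne2_two hc
      rcases Nat.even_or_odd n with he | ho
      · have rn : finrank k ↥(LinearMap.range (dMap k q q β⁻¹ n)) = 2 * n :=
          rank_def q q β⁻¹ n hn (hBn2 n) (hCn2 n) (e0_part2_zero (Even.neg_one_pow he))
        have rn1 : finrank k ↥(LinearMap.range (dMap k q q β⁻¹ (n + 1))) = 2 * (n + 1) + 1 :=
          rank_full q q β⁻¹ (n + 1) (by omega) (hBn2 (n + 1)) (hCn2 (n + 1))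
            (e0_part2_ne hq h2 (Odd.neg_one_pow (Even.add_one he)))
        have k2 : finrank k ↥(LinearMap.ker (dMap k q q β⁻¹ (n + 1))) = 2 * n + 1 := by
          rw [ker_finrank, rn1]; omega
        exact ⟨by rw [k2, rn], fun _ => by rw [k2, rn], fun h => absurd h hc⟩
      · have rn : finrank k ↥(LinearMap.range (dMap k q q β⁻¹ n)) = 2 * n + 1 :=
          rank_full q q β⁻¹ n hn (hBn2 n) (hCn2 n)
            (e0_part2_ne hq h2 (Odd.neg_one_pow ho))
        have rn1 : finrank k ↥(LinearMap.range (dMap k q q β⁻¹ (n + 1))) = 2 * (n + 1) :=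
          rank_def q q β⁻¹ (n + 1) (by omega) (hBn2 (n + 1)) (hCn2 (n + 1))
            (e0_part2_zero (Even.neg_one_pow (Odd.add_one ho)))
        have k2 : finrank k ↥(LinearMap.ker (dMap k q q β⁻¹ (n + 1))) = 2 * n + 2 := by
          rw [ker_finrank, rn1]; omega
        exact ⟨by rw [k2, rn], fun _ => by rw [k2, rn], fun h => absurd h hc⟩
end
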